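/- Let Ψ_{m,r}(e^{2πi/k}) = Σ_{n=1}^{2mk} (1/2 - n/(2mk)) ψ^{(r)}_{2m}(n) e^{iπ n²/(2mk)}, where ψ^{(r)}_{2m}(n) = 1 if n ≡ r (mod 2m), = -1 if n ≡ -r (mod 2m), and 0 otherwise. Then for k = 6 and m = 18: e^{2πi·(71/72)/6} · (Ψ_{18,1} + Ψ_{18,17})(e^{2πi/6}) combined with the p=3 odd Witt coefficients c^Witt_0 = (e^{-iπ/4}/(4√3)) Σ_{r=0}^{5} e^{-(iπ/36)(6r+3)^2} and c^Witt_1, c^Witt_2 applied to Ẑ_0 = q^{71/72}(Ψ_{18,1}+Ψ_{18,17}) and Ẑ_1 = Ẑ_2 = -q^{71/72}(Ψ_{18,5}+Ψ_{18,13}) at q = e^{2πi/6} yields the value i√3. -/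

import Mathlib

open Complex Finset

/-- The Eichler integral of the weight 3/2 false theta function at the k-th root of
unity: `Ψ_{m,r}(e^{2πi/k}) = ∑_{n=1}^{2mk} (1/2 - n/(2mk)) ψ^{(r)}_{2m}(n) e^{iπn²/(2mk)}`,
where `ψ^{(r)}_{2m}(n) = ±1` for `n ≡ ±r (mod 2m)` and `0` otherwise. -/
noncomputable def PsiFT (m r k : ℕ) : ℂ :=
  ∑ n ∈ Finset.Icc 1 (2 * m * k),
    ((1 : ℂ) / 2 - (n : ℂ) / (2 * m * k)) *
      (if n % (2 * m) = r % (2 * m) then 1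
        else if (n + r) % (2 * m) = 0 then -1 else 0) *
      Complex.exp (Real.pi * I * (n : ℂ) ^ 2 / (2 * m * k))

/-- The odd Witt coefficients for `p = 3`:
`c^{Witt}_t = (e^{-iπ/4}/(4√3)) ∑_{r=0}^{5} e^{-(iπ/36)(6r-2t+3)²}`. -/
noncomputable def cWittP3 (t : ℕ) : ℂ :=
  (Complex.exp (-(Real.pi * I) / 4) / (4 * Real.sqrt 3)) *
    ∑ r ∈ range 6,
      Complex.exp (-(Real.pi * I / 36) * (6 * (r : ℂ) - 2 * (t : ℂ) + 3) ^ 2)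

/-- Shift by an even multiple of `216`. -/
private lemma shiftE (a b : ℂ) (k : ℕ) (h : a = b + 432 * k) :
    Complex.exp (Real.pi * I * a / 216) = Complex.exp (Real.pi * I * b / 216) := by
  subst h
  have h1 : (Real.pi * I * (b + 432 * k) / 216 : ℂ)
      = (k : ℂ) * (2 * Real.pi * I) + Real.pi * I * b / 216 := by ring
  rw [h1, Complex.exp_add, Complex.exp_nat_mul, Complex.exp_two_pi_mul_I, one_pow, one_mul]

/-- Shift by an odd multiple of `216`. -/
private lemma shiftO (a b : ℂ) (k : ℕ) (h : a = b + 216 + 432 * k) :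
    Complex.exp (Real.pi * I * a / 216) = -Complex.exp (Real.pi * I * b / 216) := by
  subst h
  have h1 : (Real.pi * I * (b + 216 + 432 * k) / 216 : ℂ)
      = (k : ℂ) * (2 * Real.pi * I) + (Real.pi * I + Real.pi * I * b / 216) := by ring
  rw [h1, Complex.exp_add, Complex.exp_nat_mul, Complex.exp_two_pi_mul_I, one_pow, one_mul,
    Complex.exp_add, Complex.exp_pi_mul_I, neg_one_mul]

private lemma shiftE1 (a : ℂ) (k : ℕ) (h : a = 1 + 432 * k) :
    Complex.exp (Real.pi * I * a / 216) = Complex.exp (Real.pi * I / 216) := by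
  rw [shiftE a 1 k h]; congr 1; ring

private lemma shiftO1 (a : ℂ) (k : ℕ) (h : a = 217 + 432 * k) :
    Complex.exp (Real.pi * I * a / 216) = -Complex.exp (Real.pi * I / 216) := by
  rw [shiftO a 1 k (by rw [h]; ring)]; congr 2; ring

set_option maxHeartbeats 1000000 in
private lemma psi1_eq : PsiFT 18 1 6 =
    Complex.exp (Real.pi * I / 216) + Complex.exp (Real.pi * I * 73 / 216)
      + Complex.exp (Real.pi * I * 145 / 216) := by
  rw [PsiFT]
  rw [← Finset.sum_subset
    (s₁ := ({1,35,37,71,73,107,109,143,145,179,181,215} : Finset ℕ)) (by decide)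
    (fun x hx hxs => ?_)]
  · rw [Finset.sum_insert (by decide), Finset.sum_insert (by decide),
      Finset.sum_insert (by decide), Finset.sum_insert (by decide),
      Finset.sum_insert (by decide), Finset.sum_insert (by decide),
      Finset.sum_insert (by decide), Finset.sum_insert (by decide),
      Finset.sum_insert (by decide), Finset.sum_insert (by decide),
      Finset.sum_insert (by decide), Finset.sum_singleton]
    norm_num
    rw [shiftO 1225 145 2 (by norm_num), shiftE 1369 73 3 (by norm_num),
      shiftO 5041 73 11 (by norm_num), shiftE 5329 145 12 (by norm_num),
      shiftO1 11449 26 (by norm_num), shiftO1 11881 27 (by norm_num),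
      shiftE 20449 145 47 (by norm_num), shiftO 21025 73 48 (by norm_num),
      shiftE 32041 73 74 (by norm_num), shiftO 32761 145 75 (by norm_num),
      shiftE1 46225 107 (by norm_num)]
    ring
  · simp only [Finset.mem_Icc] at hx
    simp only [Finset.mem_insert, Finset.mem_singleton] at hxs
    push_neg at hxs
    rw [if_neg (by omega), if_neg (by omega), mul_zero, zero_mul]

set_option maxHeartbeats 1000000 in
private lemma psi17_eq : PsiFT 18 17 6 =
    -Complex.exp (Real.pi * I / 216) - Complex.exp (Real.pi * I * 73 / 216)
      + Complex.exp (Real.pi * I * 145 / 216) := by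
  rw [PsiFT]
  rw [← Finset.sum_subset
    (s₁ := ({17,19,53,55,89,91,125,127,161,163,197,199} : Finset ℕ)) (by decide)
    (fun x hx hxs => ?_)]
  · rw [Finset.sum_insert (by decide), Finset.sum_insert (by decide),
      Finset.sum_insert (by decide), Finset.sum_insert (by decide),
      Finset.sum_insert (by decide), Finset.sum_insert (by decide),
      Finset.sum_insert (by decide), Finset.sum_insert (by decide),
      Finset.sum_insert (by decide), Finset.sum_insert (by decide),
      Finset.sum_insert (by decide), Finset.sum_singleton]
    norm_num
    rw [shiftO 289 73 0 (by norm_num), shiftO 361 145 0 (by norm_num),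
      shiftO1 2809 6 (by norm_num), shiftE1 3025 7 (by norm_num),
      shiftE 7921 145 18 (by norm_num), shiftE 8281 73 19 (by norm_num),
      shiftE 15625 73 36 (by norm_num), shiftE 16129 145 37 (by norm_num),
      shiftE1 25921 60 (by norm_num), shiftO1 26569 61 (by norm_num),
      shiftO 38809 145 89 (by norm_num), shiftO 39601 73 91 (by norm_num)]
    ring
  · simp only [Finset.mem_Icc] at hx
    simp only [Finset.mem_insert, Finset.mem_singleton] at hxs
    push_neg at hxs
    rw [if_neg (by omega), if_neg (by omega), mul_zero, zero_mul]

/-- Shift by a multiple of `72` in the `-πI/36` normalization. -/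
private lemma shift36 (a b : ℂ) (k : ℕ) (h : a = b + 72 * k) :
    Complex.exp (-(Real.pi * I / 36 * a)) = Complex.exp (-(Real.pi * I / 36 * b)) := by
  subst h
  have h1 : (-(Real.pi * I / 36 * (b + 72 * k)) : ℂ)
      = ((-(k : ℤ) : ℤ) : ℂ) * (2 * Real.pi * I) + -(Real.pi * I / 36 * b) := by
    push_cast; ring
  rw [h1, Complex.exp_add, Complex.exp_int_mul, Complex.exp_two_pi_mul_I, one_zpow, one_mul]

private lemma cWitt1_eq : cWittP3 1 = 0 := by
  rw [cWittP3]
  simp only [Finset.sum_range_succ, Finset.sum_range_zero]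
  norm_num
  rw [shift36 169 25 2 (by norm_num), shift36 361 1 5 (by norm_num),
    shift36 625 49 8 (by norm_num), shift36 961 25 13 (by norm_num)]
  rw [show (-(Real.pi * I / 36 * 1) : ℂ) = -(Real.pi * I / 36) by ring]
  set u : ℂ := Complex.exp (-(2 * Real.pi * I) / 3) with hu
  have hy : Complex.exp (-(Real.pi * I / 36 * 25)) = Complex.exp (-(Real.pi * I / 36)) * u := by
    rw [hu, ← Complex.exp_add]; congr 1; ring
  have hz : Complex.exp (-(Real.pi * I / 36 * 49))
      = Complex.exp (-(Real.pi * I / 36)) * u ^ 2 := by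
    rw [hu, sq, ← Complex.exp_add, ← Complex.exp_add]; congr 1; ring
  have hu3 : u ^ 3 = 1 := by
    rw [hu, ← Complex.exp_nat_mul,
      show ((3 : ℕ) : ℂ) * (-(2 * Real.pi * I) / 3) = ((-1 : ℤ) : ℂ) * (2 * Real.pi * I) by
        push_cast; ring,
      Complex.exp_int_mul, Complex.exp_two_pi_mul_I, one_zpow]
  have hune : u ≠ 1 := by
    intro h
    rw [hu, Complex.exp_eq_one_iff] at h
    obtain ⟨n, hn⟩ := h
    have h2 : ((3 * n + 1 : ℤ) : ℂ) * (2 * Real.pi * I) = 0 := by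
      push_cast; linear_combination (-3) * hn
    rcases mul_eq_zero.mp h2 with h3 | h3
    · have : (3 * n + 1 : ℤ) = 0 := by exact_mod_cast h3
      omega
    · have hπ : (Real.pi : ℂ) ≠ 0 := Complex.ofReal_ne_zero.mpr Real.pi_ne_zero
      simp [hπ, Complex.I_ne_zero] at h3
  have hsum : (1 : ℂ) + u + u ^ 2 = 0 := by
    have h0 : (u - 1) * ((1 : ℂ) + u + u ^ 2) = 0 := by linear_combination hu3
    rcases mul_eq_zero.mp h0 with h | h
    · exact absurd h (sub_ne_zero_of_ne hune)
    · exact h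
  rw [hy, hz]
  linear_combination 2 * Complex.exp (-(Real.pi * I / 36)) * hsum

private lemma cWitt0_eq : cWittP3 0 = -(Real.sqrt 3 / 2) * I := by
  rw [cWittP3]
  simp only [Finset.sum_range_succ, Finset.sum_range_zero]
  norm_num
  rw [shift36 81 9 1 (by norm_num), shift36 225 9 3 (by norm_num),
    shift36 441 9 6 (by norm_num), shift36 729 9 10 (by norm_num),
    shift36 1089 9 15 (by norm_num)]
  have h9 : Complex.exp (-(Real.pi * I / 36 * 9)) = Complex.exp (-(Real.pi * I) / 4) := by
    congr 1; ring
  rw [h9]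
  have he2 : Complex.exp (-(Real.pi * I) / 4) * Complex.exp (-(Real.pi * I) / 4) = -I := by
    rw [← Complex.exp_add,
      show (-(Real.pi * I) / 4 + -(Real.pi * I) / 4 : ℂ) = -(Real.pi / 2) * I by ring,
      Complex.exp_mul_I]
    simp [Complex.cos_pi_div_two, Complex.sin_pi_div_two]
  have h3 : ((Real.sqrt 3 : ℝ) : ℂ) * ((Real.sqrt 3 : ℝ) : ℂ) = 3 := by
    rw [← Complex.ofReal_mul, Real.mul_self_sqrt (by norm_num)]
    norm_num
  have h3ne : ((Real.sqrt 3 : ℝ) : ℂ) ≠ 0 := by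
    simp [Real.sqrt_eq_zero', Real.sqrt_ne_zero']
  field_simp
  rw [neg_div] at he2
  linear_combination 12 * he2 + (4 * I) * h3

theorem tau6_S3_minus3_trefoil :
    cWittP3 0 * (Complex.exp (Real.pi * I * 71 / 216) * (PsiFT 18 1 6 + PsiFT 18 17 6)) +
      cWittP3 1 *
        (-(Complex.exp (Real.pi * I * 71 / 216)) * (PsiFT 18 5 6 + PsiFT 18 13 6))
    = I * Real.sqrt 3 := by
  rw [cWitt0_eq, cWitt1_eq, psi1_eq, psi17_eq]
  have hm : Complex.exp (Real.pi * I * 71 / 216) * Complex.exp (Real.pi * I * 145 / 216)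
      = -1 := by
    rw [← Complex.exp_add,
      show (Real.pi * I * 71 / 216 + Real.pi * I * 145 / 216 : ℂ) = Real.pi * I by ring,
      Complex.exp_pi_mul_I]
  have step : (Complex.exp (Real.pi * I / 216) + Complex.exp (Real.pi * I * 73 / 216)
      + Complex.exp (Real.pi * I * 145 / 216))
      + (-Complex.exp (Real.pi * I / 216) - Complex.exp (Real.pi * I * 73 / 216)
      + Complex.exp (Real.pi * I * 145 / 216)) = 2 * Complex.exp (Real.pi * I * 145 / 216) := by
    ring
  rw [step]
  linear_combination (-(Real.sqrt 3 : ℂ) * I) * hm
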